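/- arXiv:1906.03639 — 3 statements merged into one kernel-verified Lean document; each statement's English description precedes it below -/
import Mathlib

section
/- Let X, N₁, N₂ be random vectors in ℝ^n with E[N₂ | X + N₁] = 0 a.s., and suppose all relevant moments are finite. Then for any measurable f : ℝ^n → ℝ^n with f(X+N₁) integrable in L², E[‖f(X+N₁) - (X+N₂)‖²] = E[‖f(X+N₁) - X‖²] + E[‖N₂‖²] + 2E[⟨N₂, X⟩]. -/
open MeasureTheory RealInnerProductSpace

lemma coord_abs_le_norm {n : ℕ} (x : EuclideanSpace ℝ (Fin n)) (i : Fin n) :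
    |x i| ≤ ‖x‖ := by
  rw [EuclideanSpace.norm_eq]
  have h1 : |x i| = Real.sqrt (‖x i‖ ^ 2) := by
    rw [Real.sqrt_sq_eq_abs]; simp [abs_abs]
  rw [h1]
  apply Real.sqrt_le_sqrt
  exact Finset.single_le_sum (f := fun j => ‖x j‖ ^ 2)
    (fun j _ => by positivity) (Finset.mem_univ i)

theorem stmt_4 (n : ℕ) {Ω : Type*} [MeasurableSpace Ω]
    (μ : Measure Ω) [IsProbabilityMeasure μ]
    (X N₁ N₂ : Ω → EuclideanSpace ℝ (Fin n))
    (hX : Measurable X) (hN₁ : Measurable N₁) (hN₂ : Measurable N₂)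
    (hcond : μ[N₂ | MeasurableSpace.comap (fun ω => X ω + N₁ ω) inferInstance] =ᵐ[μ] 0)
    (hXsq : Integrable (fun ω => ‖X ω‖ ^ 2) μ)
    (hN₂sq : Integrable (fun ω => ‖N₂ ω‖ ^ 2) μ)
    (hXN₂ : Integrable (fun ω => ⟪N₂ ω, X ω⟫) μ)
    (f : EuclideanSpace ℝ (Fin n) → EuclideanSpace ℝ (Fin n))
    (hf : Measurable f)
    (hfsq : Integrable (fun ω => ‖f (X ω + N₁ ω)‖ ^ 2) μ)
    (hcross : Integrable (fun ω => ⟪N₂ ω, f (X ω + N₁ ω)⟫) μ) :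
    ∫ ω, ‖f (X ω + N₁ ω) - (X ω + N₂ ω)‖ ^ 2 ∂μ =
      ∫ ω, ‖f (X ω + N₁ ω) - X ω‖ ^ 2 ∂μ + ∫ ω, ‖N₂ ω‖ ^ 2 ∂μ +
        2 * ∫ ω, ⟪N₂ ω, X ω⟫ ∂μ := by
  classical
  have hYm : Measurable (fun ω => X ω + N₁ ω) := hX.add hN₁
  have hg : Measurable (fun ω => f (X ω + N₁ ω)) := hf.comp hYm
  have hm := hYm.comap_le
  -- integrability facts
  have hN₂L2 : MemLp N₂ 2 μ :=
    (memLp_two_iff_integrable_sq_norm hN₂.aestronglyMeasurable).2 hN₂sq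
  have hN₂int : Integrable N₂ μ := hN₂L2.integrable one_le_two
  have hbig : Integrable (fun ω => ‖N₂ ω‖ ^ 2 + ‖f (X ω + N₁ ω)‖ ^ 2) μ := hN₂sq.add hfsq
  -- coordinate conditional expectations vanish
  have hci : ∀ i : Fin n, μ[(fun ω => N₂ ω i) | MeasurableSpace.comap (fun ω => X ω + N₁ ω) inferInstance] =ᵐ[μ] 0 := by
    intro i
    have hproj : Integrable (fun ω => N₂ ω i) μ := by
      have := (EuclideanSpace.proj (𝕜 := ℝ) i).integrable_comp hN₂int
      simpa using this
    refine (ae_eq_condExp_of_forall_setIntegral_eq hm hproj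
      (fun s _ _ => (integrable_zero Ω ℝ μ).integrableOn)
      (fun s hs hμs => ?_)
      (StronglyMeasurable.aestronglyMeasurable (stronglyMeasurable_zero))).symm
    have hNs : ∫ ω in s, N₂ ω ∂μ = 0 := by
      have h1 : ∫ ω in s, N₂ ω ∂μ = ∫ ω in s, (μ[N₂| MeasurableSpace.comap (fun ω => X ω + N₁ ω) inferInstance]) ω ∂μ :=
        (setIntegral_condExp hm hN₂int hs).symm
      have h2 : ∫ ω in s, (μ[N₂| MeasurableSpace.comap (fun ω => X ω + N₁ ω) inferInstance]) ω ∂μ = ∫ ω in s, (0 : EuclideanSpace ℝ (Fin n)) ∂μ :=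
        integral_congr_ae (ae_restrict_of_ae hcond)
      simp [h1, h2]
    have hcomm := (EuclideanSpace.proj (𝕜 := ℝ) i).integral_comp_comm
      (hN₂int.restrict (s := s))
    simp only [Pi.zero_apply, integral_zero]
    calc (0:ℝ) = (EuclideanSpace.proj (𝕜 := ℝ) i) (∫ ω in s, N₂ ω ∂μ) := by simp [hNs]
      _ = ∫ ω in s, N₂ ω i ∂μ := by rw [← hcomm]; rfl
  -- cross term vanishes
  have hzero : ∫ ω, ⟪N₂ ω, f (X ω + N₁ ω)⟫ ∂μ = 0 := by
    have hsum : ∀ ω, ⟪N₂ ω, f (X ω + N₁ ω)⟫ =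
        ∑ i : Fin n, N₂ ω i * f (X ω + N₁ ω) i := by
      intro ω
      simp [PiLp.inner_apply, RCLike.inner_apply, mul_comm]
    have hterm : ∀ i : Fin n, Integrable (fun ω => N₂ ω i * f (X ω + N₁ ω) i) μ := by
      intro i
      refine hbig.mono' ?_ ?_
      · exact (((EuclideanSpace.proj (𝕜 := ℝ) i).continuous.measurable.comp hN₂).mul
          ((EuclideanSpace.proj (𝕜 := ℝ) i).continuous.measurable.comp hg)).aestronglyMeasurable
      · filter_upwards with ω
        have h1 : |N₂ ω i| ≤ ‖N₂ ω‖ := coord_abs_le_norm _ i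
        have h2 : |f (X ω + N₁ ω) i| ≤ ‖f (X ω + N₁ ω)‖ := coord_abs_le_norm _ i
        have h3 : (0:ℝ) ≤ |N₂ ω i| := abs_nonneg _
        have h4 : (0:ℝ) ≤ |f (X ω + N₁ ω) i| := abs_nonneg _
        have h5 : ‖N₂ ω i * f (X ω + N₁ ω) i‖ = |N₂ ω i| * |f (X ω + N₁ ω) i| := by
          rw [Real.norm_eq_abs, abs_mul]
        rw [h5]
        nlinarith [norm_nonneg (N₂ ω), norm_nonneg (f (X ω + N₁ ω)),
          mul_le_mul h1 h2 h4 (norm_nonneg (N₂ ω)),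
          sq_nonneg (‖N₂ ω‖ - ‖f (X ω + N₁ ω)‖)]
    have hzi : ∀ i : Fin n, ∫ ω, N₂ ω i * f (X ω + N₁ ω) i ∂μ = 0 := by
      intro i
      have hgi_sm : StronglyMeasurable[MeasurableSpace.comap (fun ω => X ω + N₁ ω) inferInstance] (fun ω => f (X ω + N₁ ω) i) := by
        have hYmm : Measurable[MeasurableSpace.comap (fun ω => X ω + N₁ ω) inferInstance] (fun ω => X ω + N₁ ω) :=
          Measurable.of_comap_le le_rfl
        exact (((EuclideanSpace.proj (𝕜 := ℝ) i).continuous.measurable.comp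
          hf).comp hYmm).stronglyMeasurable
      have hN₂i : Integrable (fun ω => N₂ ω i) μ := by
        have := (EuclideanSpace.proj (𝕜 := ℝ) i).integrable_comp hN₂int
        simpa using this
      have hprod : Integrable ((fun ω => f (X ω + N₁ ω) i) * fun ω => N₂ ω i) μ := by
        have := hterm i
        simpa [Pi.mul_def, mul_comm] using this
      have hpull := condExp_mul_of_stronglyMeasurable_left (μ := μ) hgi_sm hprod hN₂i
      have hz : μ[(fun ω => f (X ω + N₁ ω) i) * fun ω => N₂ ω i | MeasurableSpace.comap (fun ω => X ω + N₁ ω) inferInstance] =ᵐ[μ] 0 := by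
        refine hpull.trans ?_
        filter_upwards [hci i] with ω hω
        simp [hω]
      have hint0 : ∫ ω, ((fun ω => f (X ω + N₁ ω) i) * fun ω => N₂ ω i) ω ∂μ = 0 := by
        rw [← integral_condExp hm (f := (fun ω => f (X ω + N₁ ω) i) * fun ω => N₂ ω i)]
        rw [integral_congr_ae hz]
        simp
      calc ∫ ω, N₂ ω i * f (X ω + N₁ ω) i ∂μ
          = ∫ ω, ((fun ω => f (X ω + N₁ ω) i) * fun ω => N₂ ω i) ω ∂μ :=
            integral_congr_ae (Filter.Eventually.of_forall fun ω => mul_comm _ _)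
        _ = 0 := hint0
    calc ∫ ω, ⟪N₂ ω, f (X ω + N₁ ω)⟫ ∂μ
        = ∫ ω, ∑ i : Fin n, N₂ ω i * f (X ω + N₁ ω) i ∂μ :=
          integral_congr_ae (Filter.Eventually.of_forall hsum)
      _ = ∑ i : Fin n, ∫ ω, N₂ ω i * f (X ω + N₁ ω) i ∂μ :=
          integral_finset_sum _ (fun i _ => hterm i)
      _ = 0 := by simp [hzi]
  -- algebraic expansion
  have hptwise : ∀ ω, ‖f (X ω + N₁ ω) - (X ω + N₂ ω)‖ ^ 2 =
      ‖f (X ω + N₁ ω) - X ω‖ ^ 2 + ‖N₂ ω‖ ^ 2 +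
        (2 * ⟪N₂ ω, X ω⟫ - 2 * ⟪N₂ ω, f (X ω + N₁ ω)⟫) := by
    intro ω
    have h : f (X ω + N₁ ω) - (X ω + N₂ ω) = (f (X ω + N₁ ω) - X ω) - N₂ ω := by
      abel
    rw [h, norm_sub_sq_real]
    rw [inner_sub_left, real_inner_comm]
    rw [real_inner_comm (X ω) (N₂ ω)]
    ring
  -- integrability of the pieces
  have hfX2 : Integrable (fun ω => ‖f (X ω + N₁ ω) - X ω‖ ^ 2) μ := by
    refine ((hfsq.add hXsq).const_mul 2).mono'
      ((hg.sub hX).norm.pow_const 2).aestronglyMeasurable ?_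
    filter_upwards with ω
    have h := norm_sub_le (f (X ω + N₁ ω)) (X ω)
    have h1 := norm_nonneg (f (X ω + N₁ ω))
    have h2 := norm_nonneg (X ω)
    have h3 := norm_nonneg (f (X ω + N₁ ω) - X ω)
    rw [Real.norm_eq_abs, abs_of_nonneg (by positivity)]
    simp only [Pi.add_apply]
    nlinarith [sq_nonneg (‖f (X ω + N₁ ω)‖ - ‖X ω‖), sq_nonneg (‖f (X ω + N₁ ω)‖ + ‖X ω‖)]
  have hlin : Integrable
      (fun ω => 2 * ⟪N₂ ω, X ω⟫ - 2 * ⟪N₂ ω, f (X ω + N₁ ω)⟫) μ :=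
    (hXN₂.const_mul 2).sub (hcross.const_mul 2)
  calc ∫ ω, ‖f (X ω + N₁ ω) - (X ω + N₂ ω)‖ ^ 2 ∂μ
      = ∫ ω, (‖f (X ω + N₁ ω) - X ω‖ ^ 2 + ‖N₂ ω‖ ^ 2 +
          (2 * ⟪N₂ ω, X ω⟫ - 2 * ⟪N₂ ω, f (X ω + N₁ ω)⟫)) ∂μ :=
        integral_congr_ae (Filter.Eventually.of_forall hptwise)
    _ = ∫ ω, ‖f (X ω + N₁ ω) - X ω‖ ^ 2 ∂μ + ∫ ω, ‖N₂ ω‖ ^ 2 ∂μ +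
          ∫ ω, (2 * ⟪N₂ ω, X ω⟫ - 2 * ⟪N₂ ω, f (X ω + N₁ ω)⟫) ∂μ := by
        have hAB : Integrable
            (fun ω => ‖f (X ω + N₁ ω) - X ω‖ ^ 2 + ‖N₂ ω‖ ^ 2) μ := hfX2.add hN₂sq
        rw [integral_add hAB hlin, integral_add hfX2 hN₂sq]
    _ = ∫ ω, ‖f (X ω + N₁ ω) - X ω‖ ^ 2 ∂μ + ∫ ω, ‖N₂ ω‖ ^ 2 ∂μ +
          2 * ∫ ω, ⟪N₂ ω, X ω⟫ ∂μ := by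
        rw [integral_sub (hXN₂.const_mul 2) (hcross.const_mul 2),
          integral_const_mul, integral_const_mul, hzero]
        ring
end

section
/- Under the hypotheses that E[N₂ | X + N₁] = 0 a.s. and all second moments are finite, the set of measurable functions f : ℝ^n → ℝ^n minimizing the population risk E[‖f(X+N₁) - (X+N₂)‖²] coincides with the set minimizing E[‖f(X+N₁) - X‖²], over any fixed family F of measurable functions. -/
open MeasureTheory RealInnerProductSpace

theorem stmt_5 (n : ℕ) {Ω : Type*} [MeasurableSpace Ω]
    (μ : Measure Ω) [IsProbabilityMeasure μ]
    (X N₁ N₂ : Ω → EuclideanSpace ℝ (Fin n))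
    (hX : Measurable X) (hN₁ : Measurable N₁) (hN₂ : Measurable N₂)
    (hcond : μ[N₂ | MeasurableSpace.comap (fun ω => X ω + N₁ ω) inferInstance] =ᵐ[μ] 0)
    (hXsq : Integrable (fun ω => ‖X ω‖ ^ 2) μ)
    (hN₂sq : Integrable (fun ω => ‖N₂ ω‖ ^ 2) μ)
    (F : Set (EuclideanSpace ℝ (Fin n) → EuclideanSpace ℝ (Fin n)))
    (hF : ∀ f ∈ F, Measurable f)
    (hFsq : ∀ f ∈ F, Integrable (fun ω => ‖f (X ω + N₁ ω)‖ ^ 2) μ)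
    (hFcross : ∀ f ∈ F, Integrable (fun ω => ⟪N₂ ω, f (X ω + N₁ ω)⟫) μ) :
    {f ∈ F | ∀ g ∈ F,
        ∫ ω, ‖f (X ω + N₁ ω) - (X ω + N₂ ω)‖ ^ 2 ∂μ ≤
          ∫ ω, ‖g (X ω + N₁ ω) - (X ω + N₂ ω)‖ ^ 2 ∂μ} =
    {f ∈ F | ∀ g ∈ F,
        ∫ ω, ‖f (X ω + N₁ ω) - X ω‖ ^ 2 ∂μ ≤
          ∫ ω, ‖g (X ω + N₁ ω) - X ω‖ ^ 2 ∂μ} := by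
  set Y : Ω → EuclideanSpace ℝ (Fin n) := fun ω => X ω + N₁ ω with hYdef
  have hYm : Measurable Y := hX.add hN₁
  have hm : MeasurableSpace.comap Y inferInstance ≤ ‹MeasurableSpace Ω› := hYm.comap_le
  have hN₂mem : MemLp N₂ 2 μ :=
    (memLp_two_iff_integrable_sq_norm hN₂.aestronglyMeasurable).2 hN₂sq
  have hN₂int : Integrable N₂ μ := hN₂mem.integrable one_le_two
  have habs : ∀ (v : EuclideanSpace ℝ (Fin n)) (i : Fin n), |v i| ≤ ‖v‖ := by
    intro v i
    have h := EuclideanSpace.norm_eq v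
    have h2 : |v i| ^ 2 ≤ ‖v‖ ^ 2 := by
      rw [h, Real.sq_sqrt (by positivity)]
      have : |v i| ^ 2 = ‖v i‖ ^ 2 := by simp
      rw [this]
      exact Finset.single_le_sum (f := fun j => ‖v j‖ ^ 2)
        (fun j _ => by positivity) (Finset.mem_univ i)
    nlinarith [abs_nonneg (v i), norm_nonneg v]
  -- component conditional expectations vanish
  have hcomp : ∀ i : Fin n,
      μ[fun ω => N₂ ω i | MeasurableSpace.comap Y inferInstance] =ᵐ[μ] 0 := by
    intro i
    have hNi : Integrable (fun ω => N₂ ω i) μ :=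
      (EuclideanSpace.proj (𝕜 := ℝ) i).integrable_comp hN₂int
    refine (ae_eq_condExp_of_forall_setIntegral_eq hm hNi
      (fun s _ _ => integrableOn_zero) (fun s hs hμs => ?_)
      (stronglyMeasurable_const.aestronglyMeasurable)).symm
    have hint : IntegrableOn N₂ s μ := hN₂int.integrableOn
    have h1 : ∫ ω in s, N₂ ω i ∂μ = (EuclideanSpace.proj (𝕜 := ℝ) i) (∫ ω in s, N₂ ω ∂μ) := by
      rw [← (EuclideanSpace.proj (𝕜 := ℝ) i).integral_comp_comm hint]
      simp
    have h2 : ∫ ω in s, N₂ ω ∂μ = 0 := by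
      rw [← setIntegral_condExp hm hN₂int hs]
      calc ∫ ω in s, (μ[N₂|MeasurableSpace.comap Y inferInstance]) ω ∂μ
          = ∫ ω in s, (0 : EuclideanSpace ℝ (Fin n)) ∂μ :=
            integral_congr_ae (ae_restrict_of_ae hcond)
        _ = 0 := by simp
    simp [h1, h2]
  -- cross term vanishes
  have key : ∀ f ∈ F, ∫ ω, ⟪N₂ ω, f (Y ω)⟫ ∂μ = 0 := by
    intro f hf
    have hfY : Measurable fun ω => f (Y ω) := (hF f hf).comp hYm
    have hfi : ∀ i : Fin n, Measurable fun ω => f (Y ω) i := fun i =>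
      ((EuclideanSpace.proj (𝕜 := ℝ) i).continuous.measurable).comp hfY
    have hN₂i : ∀ i : Fin n, Measurable fun ω => N₂ ω i := fun i =>
      ((EuclideanSpace.proj (𝕜 := ℝ) i).continuous.measurable).comp hN₂
    have hprod : ∀ i : Fin n,
        Integrable (fun ω => f (Y ω) i * N₂ ω i) μ := by
      intro i
      refine Integrable.mono' ((hFsq f hf).add hN₂sq)
        (((hfi i).mul (hN₂i i)).aestronglyMeasurable)
        (Filter.Eventually.of_forall fun ω => ?_)
      have h1 := habs (f (Y ω)) i
      have h2 := habs (N₂ ω) i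
      have h3 : |f (Y ω) i * N₂ ω i| = |f (Y ω) i| * |N₂ ω i| := abs_mul _ _
      show ‖f (Y ω) i * N₂ ω i‖ ≤ ‖f (Y ω)‖ ^ 2 + ‖N₂ ω‖ ^ 2
      simp only [Real.norm_eq_abs, h3]
      nlinarith [mul_le_mul h1 h2 (abs_nonneg _) (norm_nonneg _),
        sq_nonneg (‖f (Y ω)‖ - ‖N₂ ω‖), abs_nonneg (f (Y ω) i), abs_nonneg (N₂ ω i)]
    have hterm : ∀ i : Fin n, ∫ ω, f (Y ω) i * N₂ ω i ∂μ = 0 := by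
      intro i
      have hfim : StronglyMeasurable[MeasurableSpace.comap Y inferInstance]
          fun ω => f (Y ω) i := by
        have hYmm : Measurable[MeasurableSpace.comap Y inferInstance] Y :=
          comap_measurable Y
        exact (((((EuclideanSpace.proj (𝕜 := ℝ) i).continuous.measurable).comp
          (hF f hf)).comp hYmm)).stronglyMeasurable
      have hNi : Integrable (fun ω => N₂ ω i) μ :=
        (EuclideanSpace.proj (𝕜 := ℝ) i).integrable_comp hN₂int
      have hpull := condExp_mul_of_stronglyMeasurable_left (μ := μ) hfim (hprod i) hNi
      have hz : μ[(fun ω => f (Y ω) i) * fun ω => N₂ ω i|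
          MeasurableSpace.comap Y inferInstance] =ᵐ[μ] 0 := by
        refine hpull.trans ?_
        filter_upwards [hcomp i] with ω hω
        simp only [Pi.mul_apply, Pi.zero_apply] at hω ⊢
        rw [hω, mul_zero]
      have h0 : ∫ ω, ((fun ω => f (Y ω) i) * fun ω => N₂ ω i) ω ∂μ = 0 := by
        rw [← integral_condExp hm]
        calc ∫ ω, (μ[(fun ω => f (Y ω) i) * fun ω => N₂ ω i|
              MeasurableSpace.comap Y inferInstance]) ω ∂μ
            = ∫ ω, (0 : ℝ) ∂μ := integral_congr_ae hz
          _ = 0 := by simp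
      simpa using h0
    have hinner : ∀ ω, ⟪N₂ ω, f (Y ω)⟫ = ∑ i, f (Y ω) i * N₂ ω i := by
      intro ω
      simp [PiLp.inner_apply, RCLike.inner_apply, mul_comm]
    calc ∫ ω, ⟪N₂ ω, f (Y ω)⟫ ∂μ = ∫ ω, ∑ i, f (Y ω) i * N₂ ω i ∂μ :=
          integral_congr_ae (Filter.Eventually.of_forall hinner)
      _ = ∑ i, ∫ ω, f (Y ω) i * N₂ ω i ∂μ := integral_finset_sum _ fun i _ => hprod i
      _ = 0 := by simp [hterm]
  -- integrability of the clean risk and of ⟪N₂, X⟫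
  have hinnerX : Integrable (fun ω => ⟪N₂ ω, X ω⟫) μ := by
    refine Integrable.mono' (hN₂sq.add hXsq) ((hN₂.inner hX).aestronglyMeasurable)
      (Filter.Eventually.of_forall fun ω => ?_)
    have h := abs_real_inner_le_norm (N₂ ω) (X ω)
    show ‖(⟪N₂ ω, X ω⟫ : ℝ)‖ ≤ ‖N₂ ω‖ ^ 2 + ‖X ω‖ ^ 2
    simp only [Real.norm_eq_abs]
    nlinarith [sq_nonneg (‖N₂ ω‖ - ‖X ω‖), norm_nonneg (N₂ ω), norm_nonneg (X ω)]
  have hI1 : ∀ f ∈ F, Integrable (fun ω => ‖f (Y ω) - X ω‖ ^ 2) μ := by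
    intro f hf
    have hfY : Measurable fun ω => f (Y ω) := (hF f hf).comp hYm
    refine Integrable.mono' (((hFsq f hf).const_mul 2).add (hXsq.const_mul 2))
      ((((hfY.sub hX).norm.pow measurable_const)).aestronglyMeasurable)
      (Filter.Eventually.of_forall fun ω => ?_)
    have h := norm_sub_le (f (Y ω)) (X ω)
    show ‖‖f (Y ω) - X ω‖ ^ 2‖ ≤ 2 * ‖f (Y ω)‖ ^ 2 + 2 * ‖X ω‖ ^ 2
    rw [Real.norm_eq_abs, abs_of_nonneg (sq_nonneg _)]
    nlinarith [mul_self_le_mul_self (norm_nonneg (f (Y ω) - X ω)) h,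
      sq_nonneg (‖f (Y ω)‖ - ‖X ω‖), norm_nonneg (f (Y ω)), norm_nonneg (X ω)]
  -- the two risks differ by a constant
  have hshift : ∀ f ∈ F, ∫ ω, ‖f (Y ω) - (X ω + N₂ ω)‖ ^ 2 ∂μ =
      ∫ ω, ‖f (Y ω) - X ω‖ ^ 2 ∂μ +
        ((∫ ω, ‖N₂ ω‖ ^ 2 ∂μ) + 2 * ∫ ω, ⟪N₂ ω, X ω⟫ ∂μ) := by
    intro f hf
    have hpt : ∀ ω, ‖f (Y ω) - (X ω + N₂ ω)‖ ^ 2 =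
        ‖f (Y ω) - X ω‖ ^ 2 + ‖N₂ ω‖ ^ 2 + 2 * ⟪N₂ ω, X ω⟫ - 2 * ⟪N₂ ω, f (Y ω)⟫ := by
      intro ω
      have h1 : f (Y ω) - (X ω + N₂ ω) = (f (Y ω) - X ω) - N₂ ω := by abel
      rw [h1, norm_sub_sq_real, inner_sub_left, real_inner_comm (f (Y ω)) (N₂ ω),
        real_inner_comm (X ω) (N₂ ω)]
      ring
    have hsum1 : Integrable (fun ω => ‖f (Y ω) - X ω‖ ^ 2 + ‖N₂ ω‖ ^ 2) μ :=
      (hI1 f hf).add hN₂sq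
    have hsum2 : Integrable
        (fun ω => ‖f (Y ω) - X ω‖ ^ 2 + ‖N₂ ω‖ ^ 2 + 2 * ⟪N₂ ω, X ω⟫) μ :=
      hsum1.add (hinnerX.const_mul 2)
    calc ∫ ω, ‖f (Y ω) - (X ω + N₂ ω)‖ ^ 2 ∂μ
        = ∫ ω, (‖f (Y ω) - X ω‖ ^ 2 + ‖N₂ ω‖ ^ 2 + 2 * ⟪N₂ ω, X ω⟫
            - 2 * ⟪N₂ ω, f (Y ω)⟫) ∂μ :=
          integral_congr_ae (Filter.Eventually.of_forall hpt)
      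
      _ = ∫ ω, (‖f (Y ω) - X ω‖ ^ 2 + ‖N₂ ω‖ ^ 2 + 2 * ⟪N₂ ω, X ω⟫) ∂μ
            - ∫ ω, 2 * ⟪N₂ ω, f (Y ω)⟫ ∂μ :=
          integral_sub hsum2 ((hFcross f hf).const_mul 2)
      _ = ((∫ ω, ‖f (Y ω) - X ω‖ ^ 2 ∂μ + ∫ ω, ‖N₂ ω‖ ^ 2 ∂μ)
            + ∫ ω, 2 * ⟪N₂ ω, X ω⟫ ∂μ) - ∫ ω, 2 * ⟪N₂ ω, f (Y ω)⟫ ∂μ := by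
          rw [integral_add hsum1 (hinnerX.const_mul 2), integral_add (hI1 f hf) hN₂sq]
      _ = ∫ ω, ‖f (Y ω) - X ω‖ ^ 2 ∂μ +
            ((∫ ω, ‖N₂ ω‖ ^ 2 ∂μ) + 2 * ∫ ω, ⟪N₂ ω, X ω⟫ ∂μ) := by
          rw [integral_const_mul, integral_const_mul, key f hf]
          ring
  ext f
  simp only [Set.mem_setOf_eq]
  constructor
  · rintro ⟨hf, h⟩
    refine ⟨hf, fun g hg => ?_⟩
    have hle := h g hg
    rw [hshift f hf, hshift g hg] at hle
    exact le_of_add_le_add_right hle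
  · rintro ⟨hf, h⟩
    refine ⟨hf, fun g hg => ?_⟩
    rw [hshift f hf, hshift g hg]
    exact add_le_add_left (h g hg) _
end

section
/- Let (X_i, N_{i1}, N_{i2})_{i≥1} be i.i.d. triples of integrable random vectors in ℝ^n with E[N_{12} | X_1 + N_{11}] = 0 a.s. and all needed moments finite. Fix a finite set Θ of measurable functions f : ℝ^n → ℝ^n (each with integrable cross term and square-integrable values). Then almost surely, for sufficiently large N, every minimizer over Θ of the empirical Noise2noise loss f ↦ (1/N)∑_{i=1}^N ‖f(X_i+N_{i1}) - (X_i+N_{i2})‖² is a minimizer of the population Noise2clean risk f ↦ E[‖f(X+N₁)-X‖²], provided the population Noise2clean risk attains a strict minimum at a unique element of Θ. -/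
open MeasureTheory ProbabilityTheory Filter RealInnerProductSpace Topology

private lemma memL2_inner_integrable {Ω : Type*} [MeasurableSpace Ω] {μ : Measure Ω}
    {E : Type*} [NormedAddCommGroup E] [InnerProductSpace ℝ E] {f g : Ω → E}
    (hf : MemLp f 2 μ) (hg : MemLp g 2 μ) :
    Integrable (fun ω => ⟪f ω, g ω⟫) μ := by
  have h := L2.integrable_inner (𝕜 := ℝ) (hf.toLp f) (hg.toLp g)
  apply h.congr
  filter_upwards [hf.coeFn_toLp, hg.coeFn_toLp] with ω h1 h2
  rw [h1, h2]

private abbrev mY {Ω α : Type*} [mα : MeasurableSpace α] (Y : Ω → α) : MeasurableSpace Ω :=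
  MeasurableSpace.comap Y mα

private lemma cross_zero {n : ℕ} {Ω : Type*} [mΩ : MeasurableSpace Ω] {μ : Measure Ω}
    [IsProbabilityMeasure μ]
    {Y : Ω → EuclideanSpace ℝ (Fin n)} (hY : Measurable Y)
    {W : Ω → EuclideanSpace ℝ (Fin n)} (hWmeas : Measurable W)
    (hW2 : MemLp W 2 μ)
    (hcond : μ[W | mY Y] =ᵐ[μ] 0)
    {g : EuclideanSpace ℝ (Fin n) → EuclideanSpace ℝ (Fin n)} (hg : Measurable g)
    (hg2 : MemLp (fun ω => g (Y ω)) 2 μ) :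
    ∫ ω, ⟪W ω, g (Y ω)⟫ ∂μ = 0 := by
  have hm : mY Y ≤ mΩ := hY.comap_le
  haveI : SigmaFinite (μ.trim hm) := inferInstance
  have hYm : Measurable[mY Y] Y := measurable_iff_comap_le.2 le_rfl
  have hZm : StronglyMeasurable[mY Y] (fun ω => g (Y ω)) := (hg.comp hYm).stronglyMeasurable
  have hWint : Integrable W μ := hW2.integrable one_le_two
  -- the conditional expectation of each coordinate of `W` vanishes
  have hWk0 : ∀ k : Fin n, μ[(fun ω => W ω k) | mY Y] =ᵐ[μ] 0 := by
    intro k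
    have hWkint : Integrable (fun ω => W ω k) μ :=
      (EuclideanSpace.proj (𝕜 := ℝ) k).integrable_comp hWint
    refine (ae_eq_condExp_of_forall_setIntegral_eq hm hWkint
      (fun s _ _ => integrableOn_zero) ?_ ?_).symm
    · intro s hs hμs
      have h2 : ∫ x in s, W x ∂μ = 0 := by
        rw [← setIntegral_condExp hm hWint hs]
        calc ∫ x in s, (μ[W|mY Y]) x ∂μ
            = ∫ x in s, (0 : Ω → EuclideanSpace ℝ (Fin n)) x ∂μ :=
              setIntegral_congr_ae (hm s hs) (hcond.mono fun x hx _ => hx)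
          _ = 0 := by simp
      have h1 : ∫ x in s, W x k ∂μ = (EuclideanSpace.proj (𝕜 := ℝ) k) (∫ x in s, W x ∂μ) :=
        ContinuousLinearMap.integral_comp_comm (EuclideanSpace.proj (𝕜 := ℝ) k) hWint.integrableOn
      rw [h1, h2, map_zero]
      simp
    · exact (stronglyMeasurable_zero : StronglyMeasurable[mY Y] (0 : Ω → ℝ)).aestronglyMeasurable
  -- coordinatewise products integrate to zero
  have hWk2 : ∀ k : Fin n, MemLp (fun ω => W ω k) 2 μ := fun k =>
    (EuclideanSpace.proj (𝕜 := ℝ) k).comp_memLp' hW2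
  have hZk2 : ∀ k : Fin n, MemLp (fun ω => g (Y ω) k) 2 μ := fun k =>
    (EuclideanSpace.proj (𝕜 := ℝ) k).comp_memLp' hg2
  have key : ∀ k : Fin n, ∫ ω, g (Y ω) k * W ω k ∂μ = 0 := by
    intro k
    have hZk : StronglyMeasurable[mY Y] (fun ω => g (Y ω) k) :=
      ((EuclideanSpace.proj (𝕜 := ℝ) k).continuous).comp_stronglyMeasurable hZm
    have hint : Integrable ((fun ω => g (Y ω) k) * fun ω => W ω k) μ := by
      have := memL2_inner_integrable (hZk2 k) (hWk2 k)
      simpa [RCLike.inner_apply, Pi.mul_def, mul_comm] using this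
    have hWkint : Integrable (fun ω => W ω k) μ := (hWk2 k).integrable one_le_two
    have hpull := condExp_mul_of_stronglyMeasurable_left (μ := μ) hZk hint hWkint
    have hzero : μ[(fun ω => g (Y ω) k) * fun ω => W ω k|mY Y] =ᵐ[μ] 0 := by
      refine hpull.trans ?_
      filter_upwards [hWk0 k] with ω hω
      simp [Pi.mul_apply, hω]
    calc ∫ ω, g (Y ω) k * W ω k ∂μ
        = ∫ ω, (μ[(fun ω => g (Y ω) k) * fun ω => W ω k|mY Y]) ω ∂μ :=
          (integral_condExp hm).symm
      _ = ∫ ω, (0 : Ω → ℝ) ω ∂μ := integral_congr_ae hzero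
      _ = 0 := by simp
  calc ∫ ω, ⟪W ω, g (Y ω)⟫ ∂μ = ∫ ω, ∑ k, g (Y ω) k * W ω k ∂μ := by
        refine integral_congr_ae (Filter.Eventually.of_forall fun ω => ?_)
        simp [PiLp.inner_apply, RCLike.inner_apply, mul_comm]
    _ = ∑ k, ∫ ω, g (Y ω) k * W ω k ∂μ := by
        refine integral_finset_sum _ fun k _ => ?_
        have := memL2_inner_integrable (hZk2 k) (hWk2 k)
        simpa [RCLike.inner_apply, mul_comm] using this
    _ = 0 := Finset.sum_eq_zero fun k _ => key k

theorem stmt_8 (n : ℕ) {Ω : Type*} [MeasurableSpace Ω]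
    (μ : Measure Ω) [IsProbabilityMeasure μ]
    (X N₁ N₂ : ℕ → Ω → EuclideanSpace ℝ (Fin n))
    (hmeas : ∀ i, Measurable (fun ω => (X i ω, N₁ i ω, N₂ i ω)))
    (hindep : iIndepFun (fun i ω => (X i ω, N₁ i ω, N₂ i ω)) μ)
    (hident : ∀ i, IdentDistrib (fun ω => (X i ω, N₁ i ω, N₂ i ω))
      (fun ω => (X 0 ω, N₁ 0 ω, N₂ 0 ω)) μ μ)
    (hcond : μ[N₂ 0 | MeasurableSpace.comap (fun ω => X 0 ω + N₁ 0 ω) inferInstance] =ᵐ[μ] 0)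
    (hXsq : Integrable (fun ω => ‖X 0 ω‖ ^ 2) μ)
    (hN₂sq : Integrable (fun ω => ‖N₂ 0 ω‖ ^ 2) μ)
    (Θ : Finset (EuclideanSpace ℝ (Fin n) → EuclideanSpace ℝ (Fin n)))
    (hΘmeas : ∀ f ∈ Θ, Measurable f)
    (hΘsq : ∀ f ∈ Θ, Integrable (fun ω => ‖f (X 0 ω + N₁ 0 ω)‖ ^ 2) μ)
    (hΘcross : ∀ f ∈ Θ, Integrable (fun ω => ⟪N₂ 0 ω, f (X 0 ω + N₁ 0 ω)⟫) μ)
    (hΘn2n : ∀ f ∈ Θ, Integrable (fun ω => ‖f (X 0 ω + N₁ 0 ω) - (X 0 ω + N₂ 0 ω)‖ ^ 2) μ)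
    (fstar : EuclideanSpace ℝ (Fin n) → EuclideanSpace ℝ (Fin n))
    (hfstar : fstar ∈ Θ)
    (hstrict : ∀ g ∈ Θ, g ≠ fstar →
      ∫ ω, ‖fstar (X 0 ω + N₁ 0 ω) - X 0 ω‖ ^ 2 ∂μ <
        ∫ ω, ‖g (X 0 ω + N₁ 0 ω) - X 0 ω‖ ^ 2 ∂μ) :
    ∀ᵐ ω ∂μ, ∀ᶠ N : ℕ in atTop, ∀ g ∈ Θ,
      (∀ h ∈ Θ,
        (1 / (N : ℝ)) * ∑ i ∈ Finset.range N, ‖g (X i ω + N₁ i ω) - (X i ω + N₂ i ω)‖ ^ 2 ≤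
        (1 / (N : ℝ)) * ∑ i ∈ Finset.range N, ‖h (X i ω + N₁ i ω) - (X i ω + N₂ i ω)‖ ^ 2) →
      (∀ h ∈ Θ,
        ∫ ω', ‖g (X 0 ω' + N₁ 0 ω') - X 0 ω'‖ ^ 2 ∂μ ≤
          ∫ ω', ‖h (X 0 ω' + N₁ 0 ω') - X 0 ω'‖ ^ 2 ∂μ) := by
  classical
  have hX0 : Measurable (X 0) := (hmeas 0).fst
  have hN10 : Measurable (N₁ 0) := (hmeas 0).snd.fst
  have hN20 : Measurable (N₂ 0) := (hmeas 0).snd.snd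
  have hYmeas : Measurable (fun ω => X 0 ω + N₁ 0 ω) := hX0.add hN10
  have hWL2 : MemLp (N₂ 0) 2 μ :=
    (memLp_two_iff_integrable_sq_norm hN20.aestronglyMeasurable).2 hN₂sq
  have hXL2 : MemLp (X 0) 2 μ :=
    (memLp_two_iff_integrable_sq_norm hX0.aestronglyMeasurable).2 hXsq
  have hgL2 : ∀ g ∈ Θ, MemLp (fun ω => g (X 0 ω + N₁ 0 ω)) 2 μ := fun g hg =>
    (memLp_two_iff_integrable_sq_norm
      (((hΘmeas g hg).comp hYmeas).aestronglyMeasurable)).2 (hΘsq g hg)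
  set R : (EuclideanSpace ℝ (Fin n) → EuclideanSpace ℝ (Fin n)) → ℝ :=
    fun g => ∫ ω, ‖g (X 0 ω + N₁ 0 ω) - (X 0 ω + N₂ 0 ω)‖ ^ 2 ∂μ with hR_def
  set C : (EuclideanSpace ℝ (Fin n) → EuclideanSpace ℝ (Fin n)) → ℝ :=
    fun g => ∫ ω, ‖g (X 0 ω + N₁ 0 ω) - X 0 ω‖ ^ 2 ∂μ with hC_def
  -- population Noise2noise = Noise2clean + constant
  have hRC : ∀ g ∈ Θ, R g = C g +
      (∫ ω, ‖N₂ 0 ω‖ ^ 2 ∂μ + 2 * ∫ ω, ⟪X 0 ω, N₂ 0 ω⟫ ∂μ) := by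
    intro g hg
    have hsub : MemLp (fun ω => g (X 0 ω + N₁ 0 ω) - X 0 ω) 2 μ := (hgL2 g hg).sub hXL2
    have hCint : Integrable (fun ω => ‖g (X 0 ω + N₁ 0 ω) - X 0 ω‖ ^ 2) μ :=
      (memLp_two_iff_integrable_sq_norm hsub.aestronglyMeasurable).1 hsub
    have hc1 : Integrable (fun ω => ⟪g (X 0 ω + N₁ 0 ω), N₂ 0 ω⟫) μ :=
      memL2_inner_integrable (hgL2 g hg) hWL2
    have hc2 : Integrable (fun ω => ⟪X 0 ω, N₂ 0 ω⟫) μ :=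
      memL2_inner_integrable hXL2 hWL2
    have hcsub : Integrable (fun ω => ⟪g (X 0 ω + N₁ 0 ω) - X 0 ω, N₂ 0 ω⟫) μ :=
      memL2_inner_integrable hsub hWL2
    have hzero : ∫ ω, ⟪N₂ 0 ω, g (X 0 ω + N₁ 0 ω)⟫ ∂μ = 0 :=
      cross_zero hYmeas hN20 hWL2 hcond (hΘmeas g hg) (hgL2 g hg)
    have hzero' : ∫ ω, ⟪g (X 0 ω + N₁ 0 ω), N₂ 0 ω⟫ ∂μ = 0 := by
      rw [← hzero]; congr 1; funext ω; exact real_inner_comm _ _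
    have hptw : (fun ω => ‖g (X 0 ω + N₁ 0 ω) - (X 0 ω + N₂ 0 ω)‖ ^ 2)
        = fun ω => ‖g (X 0 ω + N₁ 0 ω) - X 0 ω‖ ^ 2 + ‖N₂ 0 ω‖ ^ 2
            - 2 * ⟪g (X 0 ω + N₁ 0 ω) - X 0 ω, N₂ 0 ω⟫ := by
      funext ω
      have h : g (X 0 ω + N₁ 0 ω) - (X 0 ω + N₂ 0 ω)
          = (g (X 0 ω + N₁ 0 ω) - X 0 ω) - N₂ 0 ω := by abel
      rw [h, norm_sub_sq_real]; ring
    have hsplit : ∫ ω, ⟪g (X 0 ω + N₁ 0 ω) - X 0 ω, N₂ 0 ω⟫ ∂μ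
        = - ∫ ω, ⟪X 0 ω, N₂ 0 ω⟫ ∂μ := by
      have : (fun ω => ⟪g (X 0 ω + N₁ 0 ω) - X 0 ω, N₂ 0 ω⟫)
          = fun ω => ⟪g (X 0 ω + N₁ 0 ω), N₂ 0 ω⟫ - ⟪X 0 ω, N₂ 0 ω⟫ := by
        funext ω; rw [inner_sub_left]
      rw [this, integral_sub hc1 hc2, hzero', zero_sub]
    have h1 : Integrable (fun ω => ‖g (X 0 ω + N₁ 0 ω) - X 0 ω‖ ^ 2 + ‖N₂ 0 ω‖ ^ 2) μ :=
      hCint.add hN₂sq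
    have h2 : Integrable (fun ω => 2 * ⟪g (X 0 ω + N₁ 0 ω) - X 0 ω, N₂ 0 ω⟫) μ :=
      hcsub.const_mul 2
    simp only [hR_def, hC_def]
    calc ∫ ω, ‖g (X 0 ω + N₁ 0 ω) - (X 0 ω + N₂ 0 ω)‖ ^ 2 ∂μ
        = ∫ ω, (‖g (X 0 ω + N₁ 0 ω) - X 0 ω‖ ^ 2 + ‖N₂ 0 ω‖ ^ 2)
            - 2 * ⟪g (X 0 ω + N₁ 0 ω) - X 0 ω, N₂ 0 ω⟫ ∂μ := by
          rw [hptw]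
      _ = (∫ ω, (‖g (X 0 ω + N₁ 0 ω) - X 0 ω‖ ^ 2 + ‖N₂ 0 ω‖ ^ 2) ∂μ)
            - ∫ ω, 2 * ⟪g (X 0 ω + N₁ 0 ω) - X 0 ω, N₂ 0 ω⟫ ∂μ := integral_sub h1 h2
      _ = (∫ ω, ‖g (X 0 ω + N₁ 0 ω) - X 0 ω‖ ^ 2 ∂μ) + (∫ ω, ‖N₂ 0 ω‖ ^ 2 ∂μ)
            - 2 * ∫ ω, ⟪g (X 0 ω + N₁ 0 ω) - X 0 ω, N₂ 0 ω⟫ ∂μ := by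
          rw [integral_add hCint hN₂sq, integral_const_mul]
      _ = _ := by rw [hsplit]; ring
  -- strict gap for the population Noise2noise risk
  have hgap : ∀ g ∈ Θ, g ≠ fstar → R fstar < R g := by
    intro g hg hne
    rw [hRC g hg, hRC fstar hfstar]
    exact (add_lt_add_iff_right _).2 (hstrict g hg hne)
  -- strong law of large numbers for each hypothesis
  have hSLLN : ∀ g ∈ Θ, ∀ᵐ ω ∂μ, Tendsto (fun N : ℕ =>
      (∑ i ∈ Finset.range N, ‖g (X i ω + N₁ i ω) - (X i ω + N₂ i ω)‖ ^ 2) / N)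
      atTop (𝓝 (R g)) := by
    intro g hg
    set φ : EuclideanSpace ℝ (Fin n) × EuclideanSpace ℝ (Fin n) × EuclideanSpace ℝ (Fin n) → ℝ :=
      fun p => ‖g (p.1 + p.2.1) - (p.1 + p.2.2)‖ ^ 2 with hφ_def
    have hφm : Measurable φ := by
      have h1 : Measurable fun p : EuclideanSpace ℝ (Fin n) × EuclideanSpace ℝ (Fin n) ×
          EuclideanSpace ℝ (Fin n) => g (p.1 + p.2.1) :=
        (hΘmeas g hg).comp (measurable_fst.add measurable_snd.fst)
      exact ((h1.sub (measurable_fst.add measurable_snd.snd)).norm).pow_const 2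
    have := strong_law_ae_real (μ := μ) (fun i ω => φ (X i ω, N₁ i ω, N₂ i ω))
      (hΘn2n g hg)
      (fun i j hij => (hindep.indepFun hij).comp hφm hφm)
      (fun i => (hident i).comp hφm)
    exact this
  have hae := (ae_ball_iff Θ.countable_toSet).2 hSLLN
  filter_upwards [hae] with ω hω
  -- convergence of the empirical losses
  have hA : ∀ g ∈ Θ, Tendsto (fun N : ℕ =>
      (1 / (N : ℝ)) * ∑ i ∈ Finset.range N, ‖g (X i ω + N₁ i ω) - (X i ω + N₂ i ω)‖ ^ 2)
      atTop (𝓝 (R g)) := by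
    intro g hg
    have := hω g hg
    refine this.congr fun N => ?_
    rw [one_div_mul_eq_div]
  have hev : ∀ᶠ N : ℕ in atTop, ∀ g ∈ Θ, g ≠ fstar →
      (1 / (N : ℝ)) * ∑ i ∈ Finset.range N, ‖fstar (X i ω + N₁ i ω) - (X i ω + N₂ i ω)‖ ^ 2 <
      (1 / (N : ℝ)) * ∑ i ∈ Finset.range N, ‖g (X i ω + N₁ i ω) - (X i ω + N₂ i ω)‖ ^ 2 := by
    rw [Finset.eventually_all]
    intro g hg
    by_cases hne : g = fstar
    · filter_upwards with N h; exact absurd hne h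
    · have := (hA fstar hfstar).eventually_lt (hA g hg) (hgap g hg hne)
      exact this.mono fun N h _ => h
  filter_upwards [hev] with N hN g hgΘ hmin
  have hgf : g = fstar := by
    by_contra hne
    exact absurd (hmin fstar hfstar) (not_le.2 (hN g hgΘ hne))
  intro h hh
  rw [hgf]
  by_cases hne : h = fstar
  · rw [hne]
  · exact (hstrict h hh hne).le
end
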